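/- Let f ∈ F_q[x] be a monic divisor of x^n - 1 of degree k. For an additive character χ of F_{q^n}, the set {ψ : ψ is an additive character of F_{q^n} and χ = f ∘ ψ} has exactly q^k elements if the F_q-order of χ divides (x^n - 1)/f, and is empty otherwise. -/

import Mathlib

/-- The `𝔽_q[x]`-module action on `L`: `f ∘ β = ∑ aᵢ β^(q^i)`. -/
noncomputable def polyAct (q : ℕ) {K L : Type*} [Field K] [Field L] [Algebra K L]
    (f : Polynomial K) (β : L) : L :=
  ∑ i ∈ Finset.range (f.natDegree + 1), f.coeff i • β ^ q ^ i

open Polynomial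


section
variable (q : ℕ) {K L : Type*} [Field K] [Fintype K] [Field L] [Algebra K L]


/-- Frobenius x ↦ x^q as a K-linear endomorphism of L. -/
noncomputable def frobL (hK : Fintype.card K = q) : Module.End K L where
  toFun x := x ^ q
  map_add' x y := by
    obtain ⟨p, hp⟩ := CharP.exists K
    haveI : CharP L p := charP_of_injective_algebraMap (algebraMap K L).injective p
    obtain ⟨m, hpm, hc⟩ := FiniteField.card K p
    haveI : Fact p.Prime := ⟨hpm⟩
    simp only [← hK, hc]
    exact add_pow_char_pow ..
  map_smul' c x := by
    simp only [Algebra.smul_def, mul_pow, RingHom.id_apply]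
    rw [← map_pow]
    rw [show c ^ q = c from hK ▸ FiniteField.pow_card c]

@[simp] theorem frobL_apply (hK : Fintype.card K = q) (x : L) :
    (frobL q hK : Module.End K L) x = x ^ q := rfl

theorem frobL_pow_apply (hK : Fintype.card K = q) (i : ℕ) (β : L) :
    ((frobL q hK : Module.End K L) ^ i) β = β ^ q ^ i := by
  induction i with
  | zero => simp
  | succ i ih =>
      rw [pow_succ', Module.End.mul_apply, frobL_apply, ih, ← pow_mul, ← pow_succ]

theorem polyAct_eq_aeval (hK : Fintype.card K = q) (f : Polynomial K) (β : L) :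
    polyAct q f β = Polynomial.aeval (frobL q hK : Module.End K L) f β := by
  rw [Polynomial.aeval_eq_sum_range]
  rw [LinearMap.coe_sum, Finset.sum_apply]
  unfold polyAct
  refine Finset.sum_congr rfl fun i _ => ?_
  rw [LinearMap.smul_apply, frobL_pow_apply]

theorem polyAct_mul (hK : Fintype.card K = q) (a b : Polynomial K) (β : L) :
    polyAct q (a * b) β = polyAct q a (polyAct q b β) := by
  rw [polyAct_eq_aeval q hK, polyAct_eq_aeval q hK, polyAct_eq_aeval q hK, map_mul,
    Module.End.mul_apply]

theorem card_ker_aeval_le (hq : 1 < q) (hK : Fintype.card K = q) [Fintype L]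
    (u : Polynomial K) (hu : u.Monic) :
    Nat.card (LinearMap.ker (Polynomial.aeval (frobL q hK : Module.End K L) u))
      ≤ q ^ u.natDegree := by
  classical
  haveI : Fintype (LinearMap.ker (Polynomial.aeval (frobL q hK : Module.End K L) u)) :=
    Fintype.ofFinite _
  rw [Nat.card_eq_fintype_card]
  set d := u.natDegree with hd
  set F : Polynomial L := ∑ i ∈ Finset.range (d + 1),
    C (algebraMap K L (u.coeff i)) * X ^ q ^ i with hF
  have heval : ∀ β : L, (Polynomial.aeval (frobL q hK : Module.End K L) u) β = F.eval β := by
    intro β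
    rw [← polyAct_eq_aeval]
    unfold polyAct
    rw [hF, Polynomial.eval_finset_sum]
    exact Finset.sum_congr rfl fun i _ => by simp [Algebra.smul_def]
  have hcoeff : F.coeff (q ^ d) = 1 := by
    rw [hF, Polynomial.finset_sum_coeff, Finset.sum_eq_single d]
    · simp [Polynomial.coeff_C_mul, Polynomial.coeff_X_pow, hu.coeff_natDegree]
      exact hu.coeff_natDegree
    · intro i _ hne
      rw [Polynomial.coeff_C_mul, Polynomial.coeff_X_pow, if_neg, mul_zero]
      exact fun hqe => hne (Nat.pow_right_injective hq (show q ^ i = q ^ d from hqe.symm))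
    · intro hd'
      exact absurd (Finset.self_mem_range_succ d) hd'
  have hF0 : F ≠ 0 := fun h0 => by simp [h0] at hcoeff
  have hdegF : F.natDegree ≤ q ^ d := by
    refine Polynomial.natDegree_sum_le_of_forall_le _ _ fun i hi => ?_
    refine le_trans (Polynomial.natDegree_C_mul_le _ _) ?_
    rw [Polynomial.natDegree_X_pow]
    exact Nat.pow_le_pow_right (lt_of_lt_of_le Nat.zero_lt_one hq.le)
      (Nat.lt_succ_iff.mp (Finset.mem_range.mp hi))
  calc Fintype.card (LinearMap.ker (Polynomial.aeval (frobL q hK : Module.End K L) u))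
      ≤ F.roots.toFinset.card := by
        refine le_trans (Fintype.card_le_of_injective
          (fun b => (⟨b.1, ?_⟩ : {x // x ∈ F.roots.toFinset})) ?_) (Fintype.card_coe _).le
        · rw [Multiset.mem_toFinset, Polynomial.mem_roots hF0]
          have hb := b.2
          rw [LinearMap.mem_ker] at hb
          show F.eval b.1 = 0
          rw [← heval b.1]
          exact hb
        · intro a b hab
          simp only [Subtype.mk.injEq] at hab
          exact Subtype.ext hab
    _ ≤ F.roots.card := Multiset.toFinset_card_le _
    _ ≤ F.natDegree := Polynomial.card_roots' F
    _ ≤ q ^ d := hdegF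

end


theorem natCard_addChar {A : Type*} [AddCommGroup A] [Finite A] :
    Nat.card (AddChar A ℂ) = Nat.card A := by
  cases nonempty_fintype A
  rw [Nat.card_eq_fintype_card, Nat.card_eq_fintype_card, AddChar.card_eq]

theorem card_trivialOn {A : Type*} [AddCommGroup A] [Finite A] (H : AddSubgroup A) :
    Nat.card {ψ : AddChar A ℂ | ∀ x ∈ H, ψ x = 1} = Nat.card (A ⧸ H) := by
  have hwd : ∀ (ψ : AddChar A ℂ) (_ : ∀ x ∈ H, ψ x = 1) (a b : A),
      -a + b ∈ H → ψ a = ψ b := by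
    intro ψ hψ a b hab
    have : ψ b = ψ (a + (-a + b)) := by rw [add_neg_cancel_left]
    rw [this, AddChar.map_add_eq_mul, hψ _ hab, mul_one]
  let e : AddChar (A ⧸ H) ℂ ≃ {ψ : AddChar A ℂ | ∀ x ∈ H, ψ x = 1} :=
    { toFun := fun χ' => ⟨χ'.compAddMonoidHom (QuotientAddGroup.mk' H), fun x hx => by
        simp only [AddChar.compAddMonoidHom_apply]
        rw [show (QuotientAddGroup.mk' H) x = 0 from (QuotientAddGroup.eq_zero_iff x).mpr hx]
        exact χ'.map_zero_eq_one⟩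
      invFun := fun ψ =>
        { toFun := fun y => Quotient.liftOn' y ψ.1 (fun a b hab => hwd ψ.1 ψ.2 a b (QuotientAddGroup.leftRel_apply.mp hab))
          map_zero_eq_one' := ψ.1.map_zero_eq_one
          map_add_eq_mul' := fun a b => by
            refine Quotient.inductionOn₂' a b fun x y => ?_
            exact ψ.1.map_add_eq_mul x y }
      left_inv := fun χ' => by
        ext y
        refine Quotient.inductionOn' y fun x => ?_
        rfl
      right_inv := fun ψ => by
        ext x
        rfl }
  rw [← Nat.card_congr e, natCard_addChar]

section CharCount

variable {A : Type*} [AddCommGroup A] [Finite A] (T : A →+ A)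

/-- Composition with `T` as a monoid hom on characters. -/
noncomputable def compHom : AddChar A ℂ →* AddChar A ℂ where
  toFun ψ := ψ.compAddMonoidHom T
  map_one' := by ext a; rfl
  map_mul' ψ φ := by ext a; rfl

@[simp] theorem compHom_apply (ψ : AddChar A ℂ) (a : A) : compHom T ψ a = ψ (T a) := rfl

theorem card_ker_compHom :
    Nat.card ((compHom T).ker) = Nat.card (A ⧸ T.range) := by
  have : ((compHom T).ker : Set (AddChar A ℂ)) = {ψ : AddChar A ℂ | ∀ x ∈ T.range, ψ x = 1} := by
    ext ψ
    constructor
    · intro hψ x hx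
      obtain ⟨a, rfl⟩ := hx
      exact DFunLike.congr_fun hψ a
    · intro hψ
      ext a
      exact hψ (T a) ⟨a, rfl⟩
  calc Nat.card ((compHom T).ker)
      = Nat.card {ψ : AddChar A ℂ | ∀ x ∈ T.range, ψ x = 1} := by rw [← this]; rfl
    _ = Nat.card (A ⧸ T.range) := card_trivialOn _

theorem card_quot_range_eq : Nat.card (A ⧸ T.range) = Nat.card T.ker := by
  have h1 : Nat.card A = Nat.card (A ⧸ T.range) * Nat.card T.range :=
    AddSubgroup.card_eq_card_quotient_mul_card_addSubgroup _
  have h2 : Nat.card A = Nat.card (A ⧸ T.ker) * Nat.card T.ker :=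
    AddSubgroup.card_eq_card_quotient_mul_card_addSubgroup _
  have h3 : Nat.card (A ⧸ T.ker) = Nat.card T.range :=
    Nat.card_congr (QuotientAddGroup.quotientKerEquivRange T).toEquiv
  have hpos : 0 < Nat.card T.range := Nat.card_pos
  rw [h3] at h2
  rw [h2, Nat.mul_comm] at h1
  exact (Nat.eq_of_mul_eq_mul_right hpos h1).symm

/-- triviality on the kernel implies membership in the range of `compHom`. -/
theorem exists_comp_eq (χ : AddChar A ℂ) (hχ : ∀ x ∈ T.ker, χ x = 1) :
    ∃ ψ : AddChar A ℂ, ψ.compAddMonoidHom T = χ := by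
  set D : Subgroup (AddChar A ℂ) :=
    { carrier := {χ' : AddChar A ℂ | ∀ x ∈ T.ker, χ' x = 1}
      one_mem' := fun x _ => rfl
      mul_mem' := fun {a b} ha hb x hx => by
        rw [AddChar.mul_apply, ha x hx, hb x hx, mul_one]
      inv_mem' := fun {a} ha x hx => by
        rw [AddChar.inv_apply, ha (-x) (neg_mem hx)] } with hD
  have hle : (compHom T).range ≤ D := by
    rintro χ' ⟨ψ, rfl⟩ x hx
    simp only [compHom_apply]
    rw [AddMonoidHom.mem_ker.mp hx, AddChar.map_zero_eq_one]
  have hcard1 : Nat.card ((compHom T).range) * Nat.card (A ⧸ T.range)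
      = Nat.card (AddChar A ℂ) := by
    rw [← card_ker_compHom T]
    have := Subgroup.card_eq_card_quotient_mul_card_subgroup (compHom T).ker
    have h3 : Nat.card (AddChar A ℂ ⧸ (compHom T).ker) = Nat.card ((compHom T).range) :=
      Nat.card_congr (QuotientGroup.quotientKerEquivRange (compHom T)).toEquiv
    rw [h3] at this
    exact this.symm
  have hcard2 : Nat.card D * Nat.card (A ⧸ T.range) = Nat.card (AddChar A ℂ) := by
    have hDset : Nat.card D = Nat.card (A ⧸ T.ker) := by
      have : (D : Set (AddChar A ℂ)) = {χ' : AddChar A ℂ | ∀ x ∈ T.ker, χ' x = 1} := rfl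
      calc Nat.card D = Nat.card {χ' : AddChar A ℂ | ∀ x ∈ T.ker, χ' x = 1} := by
            rw [← this]; rfl
        _ = _ := card_trivialOn _
    rw [hDset, natCard_addChar]
    have h3 : Nat.card (A ⧸ T.ker) = Nat.card T.range :=
      Nat.card_congr (QuotientAddGroup.quotientKerEquivRange T).toEquiv
    rw [h3, card_quot_range_eq T]
    rw [Nat.mul_comm, ← card_quot_range_eq T]
    exact (AddSubgroup.card_eq_card_quotient_mul_card_addSubgroup _).symm
  have heq : (compHom T).range = D := by
    refine Subgroup.eq_of_le_of_card_ge hle ?_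
    have hpos : 0 < Nat.card (A ⧸ T.range) := Nat.card_pos
    exact Nat.le_of_mul_le_mul_right (le_of_eq (hcard2.trans hcard1.symm)) hpos
  have : χ ∈ D := hχ
  rw [← heq] at this
  obtain ⟨ψ, hψ⟩ := this
  exact ⟨ψ, hψ⟩

theorem card_fiber_eq (χ : AddChar A ℂ) (hχ : ∀ x ∈ T.ker, χ x = 1) :
    Nat.card {ψ : AddChar A ℂ | ∀ a : A, χ a = ψ (T a)} = Nat.card T.ker := by
  obtain ⟨ψ₀, hψ₀⟩ := exists_comp_eq T χ hχ
  have hψ₀' : ∀ a : A, ψ₀ (T a) = χ a := fun a => DFunLike.congr_fun hψ₀ a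
  let e : {ψ : AddChar A ℂ | ∀ a : A, χ a = ψ (T a)}
      ≃ {ψ : AddChar A ℂ | ∀ x ∈ T.range, ψ x = 1} :=
    { toFun := fun ψ => ⟨ψ.1 / ψ₀, by
        rintro x ⟨a, rfl⟩
        rw [AddChar.div_apply, ← map_neg T a, hψ₀' (-a), ← ψ.2 a,
          ← AddChar.map_add_eq_mul, add_neg_cancel, AddChar.map_zero_eq_one]⟩
      invFun := fun η => ⟨η.1 * ψ₀, fun a => by
        rw [AddChar.mul_apply, η.2 (T a) ⟨a, rfl⟩, one_mul, hψ₀' a]⟩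
      left_inv := fun ψ => Subtype.ext (div_mul_cancel ψ.1 ψ₀)
      right_inv := fun η => Subtype.ext (mul_div_cancel_right η.1 ψ₀) }
  rw [Nat.card_congr e, card_trivialOn, card_quot_range_eq]

end CharCount


theorem stmt3 (q n k : ℕ) (hq : 1 < q) (hn : 0 < n)
    (K : Type*) [Field K] [Fintype K] (hK : Fintype.card K = q)
    (L : Type*) [Field L] [Fintype L] [Algebra K L]
    (hrank : Module.finrank K L = n)
    (f : Polynomial K) (hmonic : f.Monic) (hdvd : f ∣ Polynomial.X ^ n - 1)
    (hdeg : f.natDegree = k)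
    (χ : AddChar L ℂ)
    -- `h` is the 𝔽_q-order of χ: the monic polynomial of least degree with h ∘ χ trivial
    (h : Polynomial K) (hhm : h.Monic)
    (htriv : ∀ α : L, χ (polyAct q h α) = 1)
    (hmin : ∀ h' : Polynomial K, h'.Monic → (∀ α : L, χ (polyAct q h' α) = 1) →
      h.natDegree ≤ h'.natDegree) :
    (h ∣ (Polynomial.X ^ n - 1) / f →
      Nat.card {ψ : AddChar L ℂ | ∀ α : L, χ α = ψ (polyAct q f α)} = q ^ k) ∧
    (¬ h ∣ (Polynomial.X ^ n - 1) / f →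
      {ψ : AddChar L ℂ | ∀ α : L, χ α = ψ (polyAct q f α)} = ∅) := by
  classical
  haveI : FiniteDimensional K L := by infer_instance
  set φ : Module.End K L := frobL q hK with hφ
  have key : ∀ (u : Polynomial K) (β : L), polyAct q u β = Polynomial.aeval φ u β :=
    fun u β => polyAct_eq_aeval q hK u β
  -- the complementary divisor g
  obtain ⟨g, hg⟩ := hdvd
  have hf0 : f ≠ 0 := hmonic.ne_zero
  have hXn : (X ^ n - 1 : Polynomial K).Monic := by
    have := monic_X_pow_sub_C (1 : K) hn.ne'
    simpa using this
  have hXndeg : (X ^ n - 1 : Polynomial K).natDegree = n := by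
    rw [show (1 : Polynomial K) = C 1 from rfl, natDegree_X_pow_sub_C]
  have hgmonic : g.Monic := hmonic.of_mul_monic_left (hg ▸ hXn)
  have hg0 : g ≠ 0 := hgmonic.ne_zero
  have hsum : k + g.natDegree = n := by
    have := natDegree_mul hf0 hg0
    rw [← hg, hXndeg, hdeg] at this
    omega
  have hgdeg : g.natDegree = n - k := by omega
  have hkn : k ≤ n := by omega
  have hdivq : (X ^ n - 1 : Polynomial K) / f = g := by
    rw [hg]; exact mul_div_cancel_left₀ g hf0
  -- the linear maps
  set Tl : Module.End K L := Polynomial.aeval φ f with hTl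
  set Ul : Module.End K L := Polynomial.aeval φ g with hUl
  have hcardL : Fintype.card L = q ^ n := by
    rw [Module.card_eq_pow_finrank (K := K), hK, hrank]
  have hXzero : ∀ β : L, Polynomial.aeval φ (X ^ n - 1 : Polynomial K) β = 0 := by
    intro β
    rw [map_sub, map_pow, Polynomial.aeval_X, map_one, LinearMap.sub_apply,
      Module.End.one_apply, frobL_pow_apply, ← hcardL, FiniteField.pow_card, sub_self]
  have hTU : ∀ β : L, Tl (Ul β) = 0 := by
    intro β
    rw [hTl, hUl, ← Module.End.mul_apply, ← map_mul, ← hg, hXzero]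
  -- finrank computations
  have hcardNat : ∀ (u : Polynomial K), u.Monic →
      Module.finrank K (LinearMap.ker (Polynomial.aeval φ u)) ≤ u.natDegree := by
    intro u hu
    have h1 := card_ker_aeval_le (L := L) q hq hK u hu
    haveI : Fintype (LinearMap.ker (Polynomial.aeval φ u)) := Fintype.ofFinite _
    rw [Nat.card_eq_fintype_card, Module.card_eq_pow_finrank (K := K), hK] at h1
    exact (Nat.pow_le_pow_iff_right hq).mp h1
  have hfk : Module.finrank K (LinearMap.ker Tl) ≤ k := hdeg ▸ hcardNat f hmonic
  have hfg : Module.finrank K (LinearMap.ker Ul) ≤ n - k := hgdeg ▸ hcardNat g hgmonic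
  have hrange_le : LinearMap.range Ul ≤ LinearMap.ker Tl := by
    rintro x ⟨β, rfl⟩
    exact LinearMap.mem_ker.mpr (hTU β)
  have hrn : Module.finrank K (LinearMap.range Ul) + Module.finrank K (LinearMap.ker Ul) = n := by
    rw [LinearMap.finrank_range_add_finrank_ker, hrank]
  have hrange_ge : k ≤ Module.finrank K (LinearMap.range Ul) := by omega
  have heq : LinearMap.range Ul = LinearMap.ker Tl :=
    Submodule.eq_of_le_of_finrank_le hrange_le (le_trans hfk hrange_ge)
  have hfinkerT : Module.finrank K (LinearMap.ker Tl) = k := by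
    refine le_antisymm hfk ?_
    rw [← heq]
    exact hrange_ge
  have hcardkerT : Nat.card (LinearMap.ker Tl) = q ^ k := by
    haveI : Fintype (LinearMap.ker Tl) := Fintype.ofFinite _
    rw [Nat.card_eq_fintype_card, Module.card_eq_pow_finrank (K := K), hK, hfinkerT]
  -- Claim 1: triviality of g ∘ χ iff h ∣ g
  have claim1 : (∀ α : L, χ (polyAct q g α) = 1) ↔ h ∣ g := by
    constructor
    · intro H1
      have hmod : g %ₘ h + h * (g /ₘ h) = g := Polynomial.modByMonic_add_div g h
      have hr1 : ∀ α : L, χ (polyAct q (g %ₘ h) α) = 1 := by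
        intro α
        have hadd : polyAct q g α = polyAct q (g %ₘ h) α + polyAct q (h * (g /ₘ h)) α := by
          rw [key, key, key, ← LinearMap.add_apply, ← map_add, hmod]
        have h2 : χ (polyAct q (h * (g /ₘ h)) α) = 1 := by
          rw [polyAct_mul q hK]; exact htriv _
        have := H1 α
        rw [hadd, AddChar.map_add_eq_mul, h2, mul_one] at this
        exact this
      by_cases hr0 : g %ₘ h = 0
      · exact (Polynomial.modByMonic_eq_zero_iff_dvd hhm).mp hr0
      · exfalso
        set r := g %ₘ h with hr
        have hmonr : (r * C r.leadingCoeff⁻¹).Monic := monic_mul_leadingCoeff_inv hr0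
        have htrivr : ∀ α : L, χ (polyAct q (r * C r.leadingCoeff⁻¹) α) = 1 := by
          intro α
          rw [polyAct_mul q hK]
          have hC : polyAct q (C r.leadingCoeff⁻¹) α = r.leadingCoeff⁻¹ • α := by
            rw [key, Polynomial.aeval_C, Module.algebraMap_end_apply]
          rw [hC]
          exact hr1 _
        have hle := hmin _ hmonr htrivr
        have hdegr : (r * C r.leadingCoeff⁻¹).natDegree = r.natDegree := by
          rw [natDegree_mul hr0 (by simp [leadingCoeff_ne_zero.mpr hr0]), natDegree_C, add_zero]
        have hlt : r.natDegree < h.natDegree :=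
          Polynomial.natDegree_lt_natDegree hr0 (Polynomial.degree_modByMonic_lt g hhm)
        omega
    · rintro ⟨a, rfl⟩ α
      rw [polyAct_mul q hK]
      exact htriv _
  -- bridging to the additive monoid hom
  set Tadd : L →+ L := Tl.toAddMonoidHom with hTadd
  have hSset : {ψ : AddChar L ℂ | ∀ α : L, χ α = ψ (polyAct q f α)}
      = {ψ : AddChar L ℂ | ∀ a : L, χ a = ψ (Tadd a)} := by
    ext ψ
    constructor
    · intro hψ a
      have := hψ a
      rwa [key f a] at this
    · intro hψ a
      have := hψ a
      rw [key f a]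
      exact this
  have hkermem : ∀ x : L, x ∈ Tadd.ker ↔ x ∈ LinearMap.ker Tl := fun x => Iff.rfl
  have hcardker : Nat.card Tadd.ker = q ^ k := by
    rw [← hcardkerT]
    exact Nat.card_congr (Equiv.subtypeEquivRight hkermem)
  constructor
  · -- nonempty case
    intro hdvd'
    rw [hdivq] at hdvd'
    have hχker : ∀ x ∈ Tadd.ker, χ x = 1 := by
      intro x hx
      rw [hkermem, ← heq] at hx
      obtain ⟨β, rfl⟩ := hx
      have := claim1.mpr hdvd' β
      rwa [key g β] at this
    rw [hSset, card_fiber_eq Tadd χ hχker, hcardker]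
  · -- empty case
    intro hnd
    rw [hdivq] at hnd
    rw [Set.eq_empty_iff_forall_notMem]
    intro ψ hψ
    apply hnd
    apply claim1.mp
    intro α
    have h1 : χ (polyAct q g α) = ψ (polyAct q f (polyAct q g α)) := hψ (polyAct q g α)
    rw [← polyAct_mul q hK, ← hg] at h1
    have h2 : polyAct q (X ^ n - 1 : Polynomial K) α = 0 := by
      rw [key]; exact hXzero α
    rw [h1, h2, AddChar.map_zero_eq_one]
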